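/- Let (E,z) be a gradient pair for H ∈ C¹(X,ℝ) on an open set X ⊆ ℝⁿ with constant matrix E ∈ ℝ^{n×n} of rank r, let E = U Σ Vᵀ be a singular value decomposition with U = [U₁, U₂], V = [V₁, V₂], Σ = diag(Σ₁, 0), where U₁, V₁ ∈ ℝ^{n×r} and Σ₁ ∈ ℝ^{r×r} is invertible. Assume that X̃ = VᵀX := {Vᵀx : x ∈ X} has the form X̃₁ × X̃₂ ⊆ ℝ^{r} × ℝ^{n−r} with X̃₂ open and convex. Then: (i) the function H̃ = H∘φ with φ(x̃) = Vx̃ admits a specified function H̃₁ ∈ C¹(X̃₁,ℝ) satisfying H̃₁(x̃₁) = H(V₁x̃₁ + V₂x̃₂) for all (x̃₁,x̃₂) ∈ X̃, in particular H̃₁(V₁ᵀx) = H(x) for all x ∈ X; and (ii) if D̄H̃₁ is a discrete gradient for H̃₁ and ẑ₂ : X × X → ℝ^{n−r} is continuous with ẑ₂(x,x) = U₂ᵀ z(x) for all x ∈ X, then the pair (Ē, z̄) with Ē(x,x') = E and z̄(x,x') = U₁ Σ₁^{-ᵀ} D̄H̃₁(V₁ᵀx, V₁ᵀx') + U₂ ẑ₂(x,x')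 is a discrete gradient pair for (H,E,z). -/

import Mathlib

open Matrix Set

noncomputable def gradI {ι : Type} [Fintype ι] [DecidableEq ι]
    (f : (ι → ℝ) → ℝ) (x : ι → ℝ) : ι → ℝ :=
  fun i => fderiv ℝ f x (Pi.single i 1)

def IsDiscreteGradientI {ι : Type} [Fintype ι] [DecidableEq ι]
    (X : Set (ι → ℝ)) (f : (ι → ℝ) → ℝ)
    (Df : (ι → ℝ) → (ι → ℝ) → (ι → ℝ)) : Prop :=
  ContinuousOn (fun p : (ι → ℝ) × (ι → ℝ) => Df p.1 p.2) (X ×ˢ X) ∧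
  (∀ x ∈ X, ∀ x' ∈ X, Df x x' ⬝ᵥ (x' - x) = f x' - f x) ∧
  (∀ x ∈ X, Df x x = gradI f x)

def IsDiscreteGradientPairI {ι : Type} [Fintype ι] [DecidableEq ι]
    (X : Set (ι → ℝ)) (H : (ι → ℝ) → ℝ)
    (E : (ι → ℝ) → Matrix ι ι ℝ) (z : (ι → ℝ) → (ι → ℝ))
    (Ebar : (ι → ℝ) → (ι → ℝ) → Matrix ι ι ℝ)
    (zbar : (ι → ℝ) → (ι → ℝ) → (ι → ℝ)) : Prop :=
  ContinuousOn (fun p : (ι → ℝ) × (ι → ℝ) => Ebar p.1 p.2) (X ×ˢ X) ∧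
  ContinuousOn (fun p : (ι → ℝ) × (ι → ℝ) => zbar p.1 p.2) (X ×ˢ X) ∧
  (∀ x ∈ X, ∀ x' ∈ X, zbar x x' ⬝ᵥ (Ebar x x').mulVec (x' - x) = H x' - H x) ∧
  (∀ x ∈ X, Ebar x x = E x) ∧
  (∀ x ∈ X, zbar x x = z x)

/- auxiliary lemmas -/

lemma aux_contDiff_mulVec {m n : Type} [Fintype m] [Fintype n] (M : Matrix m n ℝ) :
    ContDiff ℝ ⊤ fun v : n → ℝ => M.mulVec v := by
  apply contDiff_pi.mpr
  intro i
  simp only [Matrix.mulVec, dotProduct]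
  exact ContDiff.sum fun j _ =>
    contDiff_const.mul ((ContinuousLinearMap.proj j : (n → ℝ) →L[ℝ] ℝ).contDiff)

lemma aux_cont_mulVec {m n : Type} [Fintype m] [Fintype n] (M : Matrix m n ℝ) :
    Continuous fun v : n → ℝ => M.mulVec v :=
  (aux_contDiff_mulVec M).continuous

lemma gradI_dot {ι : Type} [Fintype ι] [DecidableEq ι] (f : (ι → ℝ) → ℝ) (x v : ι → ℝ) :
    gradI f x ⬝ᵥ v = fderiv ℝ f x v := by
  conv_rhs => rw [show v = ∑ i, Pi.single i (v i) from (Finset.univ_sum_single v).symm]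
  rw [map_sum]
  have h : ∀ i, fderiv ℝ f x (Pi.single i (v i)) = v i * fderiv ℝ f x (Pi.single i 1) := by
    intro i
    have : (Pi.single i (v i) : ι → ℝ) = v i • (Pi.single i 1 : ι → ℝ) := by
      rw [← Pi.single_smul, smul_eq_mul, mul_one]
    rw [this, _root_.map_smul, smul_eq_mul]
  simp [gradI, dotProduct, h, mul_comm]

def elimLinR (r s : ℕ) : (Fin s → ℝ) →ₗ[ℝ] ((Fin r ⊕ Fin s) → ℝ) where
  toFun t := Sum.elim 0 t
  map_add' a b := by funext x; cases x <;> simp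
  map_smul' c a := by funext x; cases x <;> simp

def elimLinL (r s : ℕ) : (Fin r → ℝ) →ₗ[ℝ] ((Fin r ⊕ Fin s) → ℝ) where
  toFun t := Sum.elim t 0
  map_add' a b := by funext x; cases x <;> simp
  map_smul' c a := by funext x; cases x <;> simp

lemma aux_single_mulVec {n : Type} [Fintype n] [DecidableEq n] (M : Matrix n n ℝ) (i : n) :
    M.mulVec (Pi.single i 1) = fun k => M k i := by
  funext k
  simp [Matrix.mulVec, dotProduct, Pi.single_apply, mul_ite]

/-- construction of a discrete gradient pair for a gradient pair with
constant descriptor matrix `E` via a singular value decomposition `E = U Σ Vᵀ`.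
Here `n` is split as `r + s` with `s = n − r`, `U₁, V₁` are the first `r` columns of
`U, V`, and `Σ = diag(Σ₁, 0)`. -/
theorem discrete_gradient_pair_constant_E {r s : ℕ}
    (X : Set ((Fin r ⊕ Fin s) → ℝ)) (hX : IsOpen X)
    (H : ((Fin r ⊕ Fin s) → ℝ) → ℝ) (hH : ContDiffOn ℝ 1 H X)
    (E U V : Matrix (Fin r ⊕ Fin s) (Fin r ⊕ Fin s) ℝ)
    (S1 : Matrix (Fin r) (Fin r) ℝ)
    (hU : Uᵀ * U = 1) (hV : Vᵀ * V = 1) (hS1 : IsUnit S1.det)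
    (hSVD : E = U * (Matrix.fromBlocks S1 0 0 0 :
      Matrix (Fin r ⊕ Fin s) (Fin r ⊕ Fin s) ℝ) * Vᵀ)
    (z : ((Fin r ⊕ Fin s) → ℝ) → ((Fin r ⊕ Fin s) → ℝ))
    (hzcont : ContinuousOn z X)
    (hgradpair : ∀ x ∈ X, Eᵀ.mulVec (z x) = gradI H x)
    -- the transformed state space VᵀX has product form X̃₁ × X̃₂ with X̃₂ open convex
    (Xt1 : Set (Fin r → ℝ)) (Xt2 : Set (Fin s → ℝ))
    (hXt2open : IsOpen Xt2) (hXt2conv : Convex ℝ Xt2)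
    (hXt : (fun x => Vᵀ.mulVec x) '' X
      = {xt : (Fin r ⊕ Fin s) → ℝ |
          (fun i => xt (Sum.inl i)) ∈ Xt1 ∧ (fun j => xt (Sum.inr j)) ∈ Xt2}) :
    ∃ Ht1 : (Fin r → ℝ) → ℝ,
      -- (i) H̃ = H ∘ (V ·) admits the specified function H̃₁
      ContDiffOn ℝ 1 Ht1 Xt1 ∧
      (∀ xt1 ∈ Xt1, ∀ xt2 ∈ Xt2, Ht1 xt1 = H (V.mulVec (Sum.elim xt1 xt2))) ∧
      (∀ x ∈ X, Ht1 (fun i => Vᵀ.mulVec x (Sum.inl i)) = H x) ∧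
      -- (ii) the induced discrete gradient pair for (H, E, z)
      (∀ DHt1 : (Fin r → ℝ) → (Fin r → ℝ) → (Fin r → ℝ),
        IsDiscreteGradientI Xt1 Ht1 DHt1 →
        ∀ zh2 : ((Fin r ⊕ Fin s) → ℝ) → ((Fin r ⊕ Fin s) → ℝ) → (Fin s → ℝ),
          ContinuousOn (fun p : ((Fin r ⊕ Fin s) → ℝ) × ((Fin r ⊕ Fin s) → ℝ) =>
            zh2 p.1 p.2) (X ×ˢ X) →
          (∀ x ∈ X, zh2 x x = fun j => Uᵀ.mulVec (z x) (Sum.inr j)) →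
          IsDiscreteGradientPairI X H (fun _ => E) z (fun _ _ => E)
            (fun x x' =>
              (Matrix.of fun i (a : Fin r) => U i (Sum.inl a)).mulVec
                ((S1ᵀ)⁻¹.mulVec (DHt1
                  (fun a => Vᵀ.mulVec x (Sum.inl a))
                  (fun a => Vᵀ.mulVec x' (Sum.inl a))))
              + (Matrix.of fun i (b : Fin s) => U i (Sum.inr b)).mulVec (zh2 x x'))) := by
  classical
  -- orthogonality facts
  have hVVt : V * Vᵀ = 1 := mul_eq_one_comm.mp hV
  have hUUt : U * Uᵀ = 1 := mul_eq_one_comm.mp hU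
  have hVVt' : ∀ x, V.mulVec (Vᵀ.mulVec x) = x := fun x => by
    rw [Matrix.mulVec_mulVec, hVVt, Matrix.one_mulVec]
  have hVtV' : ∀ x, Vᵀ.mulVec (V.mulVec x) = x := fun x => by
    rw [Matrix.mulVec_mulVec, hV, Matrix.one_mulVec]
  have hUtU' : ∀ x, Uᵀ.mulVec (U.mulVec x) = x := fun x => by
    rw [Matrix.mulVec_mulVec, hU, Matrix.one_mulVec]
  have hUUt' : ∀ x, U.mulVec (Uᵀ.mulVec x) = x := fun x => by
    rw [Matrix.mulVec_mulVec, hUUt, Matrix.one_mulVec]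
  have helim : ∀ xt : (Fin r ⊕ Fin s) → ℝ,
      (Sum.elim (fun i => xt (Sum.inl i)) (fun j => xt (Sum.inr j)) : (Fin r ⊕ Fin s) → ℝ)
        = xt := by
    intro xt; funext k; cases k <;> rfl
  -- membership characterization
  have hmem : ∀ xt : (Fin r ⊕ Fin s) → ℝ,
      ((fun i => xt (Sum.inl i)) ∈ Xt1 ∧ (fun j => xt (Sum.inr j)) ∈ Xt2)
        ↔ V.mulVec xt ∈ X := by
    intro xt
    constructor
    · intro h
      have hmem2 : xt ∈ (fun x => Vᵀ.mulVec x) '' X := by rw [hXt]; exact h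
      obtain ⟨x, hx, hxe⟩ := hmem2
      rw [← hxe, hVVt']; exact hx
    · intro h
      have hmem2 : xt ∈ (fun x => Vᵀ.mulVec x) '' X := ⟨V.mulVec xt, h, hVtV' xt⟩
      rw [hXt] at hmem2; exact hmem2
  have hmemP : ∀ xt1 ∈ Xt1, ∀ xt2 ∈ Xt2,
      V.mulVec (Sum.elim xt1 xt2) ∈ X := by
    intro xt1 h1 xt2 h2
    exact (hmem (Sum.elim xt1 xt2)).mp ⟨h1, h2⟩
  have hmemX : ∀ x ∈ X, (fun i => Vᵀ.mulVec x (Sum.inl i)) ∈ Xt1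
      ∧ (fun j => Vᵀ.mulVec x (Sum.inr j)) ∈ Xt2 := by
    intro x hx
    apply (hmem (Vᵀ.mulVec x)).mpr
    rw [hVVt']; exact hx
  -- handle the degenerate case Xt2 = ∅
  by_cases hne : Xt2.Nonempty
  swap
  · have hXe : X = ∅ := by
      ext x
      simp only [Set.mem_empty_iff_false, iff_false]
      intro hx
      exact hne ⟨_, (hmemX x hx).2⟩
    refine ⟨fun _ => 0, contDiffOn_const, ?_, ?_, ?_⟩
    · intro xt1 _ xt2 hxt2
      exact absurd ⟨xt2, hxt2⟩ hne
    · intro x hx; rw [hXe] at hx; exact absurd hx (Set.notMem_empty x)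
    · intro DHt1 _ zh2 _ _
      refine ⟨?_, ?_, ?_, ?_, ?_⟩ <;> simp [hXe]
  obtain ⟨c, hc⟩ := hne
  -- H is differentiable at points of X
  have hdiffH : ∀ x ∈ X, DifferentiableAt ℝ H x := fun x hx =>
    (hH.differentiableOn one_ne_zero).differentiableAt (hX.mem_nhds hx)
  -- ΣVᵀ V u = Σ u computation: E (V u) = U (Σ u) with Σ u = elim (S1 u₁) 0
  have hEV : ∀ u : (Fin r ⊕ Fin s) → ℝ,
      E.mulVec (V.mulVec u)
        = U.mulVec (Sum.elim (S1.mulVec fun i => u (Sum.inl i)) 0) := by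
    intro u
    rw [hSVD]
    rw [Matrix.mulVec_mulVec, Matrix.mul_assoc, Matrix.mul_assoc, hV, Matrix.mul_one,
      ← Matrix.mulVec_mulVec]
    congr 1
    conv_lhs => rw [← helim u]
    rw [Matrix.fromBlocks_mulVec]
    simp
  -- directional-derivative computation from the gradient pair
  have hgrad_dot : ∀ x0 ∈ X, ∀ w : (Fin r ⊕ Fin s) → ℝ,
      fderiv ℝ H x0 (V.mulVec w)
        = (fun i => Uᵀ.mulVec (z x0) (Sum.inl i)) ⬝ᵥ (S1.mulVec fun i => w (Sum.inl i)) := by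
    intro x0 hx0 w
    rw [← gradI_dot, ← hgradpair x0 hx0, Matrix.mulVec_transpose,
      ← Matrix.dotProduct_mulVec, hEV w, Matrix.dotProduct_mulVec,
      ← Matrix.mulVec_transpose]
    conv_lhs => rw [← helim (Uᵀ.mulVec (z x0))]
    rw [sumElim_dotProduct_sumElim]
    simp
  -- the affine maps t ↦ V (elim t y) (for fixed y) and their derivative structure
  have hElimC : ∀ xt2 : Fin s → ℝ,
      ContDiff ℝ ⊤ (fun t : Fin r → ℝ => (Sum.elim t xt2 : (Fin r ⊕ Fin s) → ℝ)) := by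
    intro xt2
    apply contDiff_pi.mpr
    rintro (i | j)
    · exact (ContinuousLinearMap.proj i : (Fin r → ℝ) →L[ℝ] ℝ).contDiff
    · exact contDiff_const
  have hElimC2 : ∀ xt1 : Fin r → ℝ,
      ContDiff ℝ ⊤ (fun y : Fin s → ℝ => (Sum.elim xt1 y : (Fin r ⊕ Fin s) → ℝ)) := by
    intro xt1
    apply contDiff_pi.mpr
    rintro (i | j)
    · exact contDiff_const
    · exact (ContinuousLinearMap.proj j : (Fin s → ℝ) →L[ℝ] ℝ).contDiff
  -- continuous linear maps for the linear parts
  set MR : (Fin s → ℝ) →L[ℝ] ((Fin r ⊕ Fin s) → ℝ) :=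
    LinearMap.toContinuousLinearMap ((Matrix.mulVecLin V).comp (elimLinR r s)) with hMR
  set ML : (Fin r → ℝ) →L[ℝ] ((Fin r ⊕ Fin s) → ℝ) :=
    LinearMap.toContinuousLinearMap ((Matrix.mulVecLin V).comp (elimLinL r s)) with hML
  have hMRapp : ∀ v, MR v = V.mulVec (Sum.elim 0 v) := fun v => rfl
  have hMLapp : ∀ v, ML v = V.mulVec (Sum.elim v 0) := fun v => rfl
  -- derivative of y ↦ H (V (elim xt1 y)) is MR-composed
  have hfdR : ∀ xt1 : Fin r → ℝ, ∀ y : Fin s → ℝ, V.mulVec (Sum.elim xt1 y) ∈ X →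
      HasFDerivAt (fun y' : Fin s → ℝ => H (V.mulVec (Sum.elim xt1 y')))
        ((fderiv ℝ H (V.mulVec (Sum.elim xt1 y))).comp MR) y := by
    intro xt1 y hy
    have hB : HasFDerivAt (fun y' : Fin s → ℝ => V.mulVec (Sum.elim xt1 y')) MR y := by
      have hfun : (fun y' : Fin s → ℝ => V.mulVec (Sum.elim xt1 y'))
          = fun y' => MR y' + V.mulVec (Sum.elim xt1 0) := by
        funext y'
        rw [hMRapp, ← Matrix.mulVec_add]
        have he : (Sum.elim xt1 y' : (Fin r ⊕ Fin s) → ℝ)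
            = Sum.elim (0 : Fin r → ℝ) y' + Sum.elim xt1 (0 : Fin s → ℝ) := by
          funext k; cases k <;> simp
        rw [he]
      rw [hfun]
      exact MR.hasFDerivAt.add_const _
    exact ((hdiffH _ hy).hasFDerivAt).comp y hB
  have hfdL : ∀ xt2 : Fin s → ℝ, ∀ t : Fin r → ℝ, V.mulVec (Sum.elim t xt2) ∈ X →
      HasFDerivAt (fun t' : Fin r → ℝ => H (V.mulVec (Sum.elim t' xt2)))
        ((fderiv ℝ H (V.mulVec (Sum.elim t xt2))).comp ML) t := by
    intro xt2 t ht
    have hB : HasFDerivAt (fun t' : Fin r → ℝ => V.mulVec (Sum.elim t' xt2)) ML t := by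
      have hfun : (fun t' : Fin r → ℝ => V.mulVec (Sum.elim t' xt2))
          = fun t' => ML t' + V.mulVec (Sum.elim 0 xt2) := by
        funext t'
        rw [hMLapp, ← Matrix.mulVec_add]
        have he : (Sum.elim t' xt2 : (Fin r ⊕ Fin s) → ℝ)
            = Sum.elim t' (0 : Fin s → ℝ) + Sum.elim (0 : Fin r → ℝ) xt2 := by
          funext k; cases k <;> simp
        rw [he]
      rw [hfun]
      exact ML.hasFDerivAt.add_const _
    exact ((hdiffH _ ht).hasFDerivAt).comp t hB
  -- independence of the second variable
  have hindep : ∀ xt1 ∈ Xt1, ∀ xt2 ∈ Xt2, ∀ xt2' ∈ Xt2,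
      H (V.mulVec (Sum.elim xt1 xt2)) = H (V.mulVec (Sum.elim xt1 xt2')) := by
    intro xt1 h1 xt2 h2 xt2' h2'
    have hg : ∀ y ∈ Xt2,
        HasFDerivAt (fun y' : Fin s → ℝ => H (V.mulVec (Sum.elim xt1 y')))
          ((fderiv ℝ H (V.mulVec (Sum.elim xt1 y))).comp MR) y :=
      fun y hy => hfdR xt1 y (hmemP xt1 h1 y hy)
    have hzero : ∀ y ∈ Xt2,
        fderivWithin ℝ (fun y' : Fin s → ℝ => H (V.mulVec (Sum.elim xt1 y'))) Xt2 y = 0 := by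
      intro y hy
      rw [fderivWithin_of_isOpen hXt2open hy, (hg y hy).fderiv]
      apply ContinuousLinearMap.ext
      intro v
      rw [ContinuousLinearMap.comp_apply, hMRapp,
        hgrad_dot _ (hmemP xt1 h1 y hy) (Sum.elim 0 v)]
      have : (fun i => (Sum.elim (0 : Fin r → ℝ) v) (Sum.inl i)) = (0 : Fin r → ℝ) := rfl
      rw [this, Matrix.mulVec_zero, dotProduct_zero]
      rfl
    exact hXt2conv.is_const_of_fderivWithin_eq_zero
      (fun y hy => ((hg y hy).differentiableAt).differentiableWithinAt) hzero h2 h2'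
  -- the specified function
  refine ⟨fun t => H (V.mulVec (Sum.elim t c)), ?_, ?_, ?_, ?_⟩
  · -- ContDiffOn
    have hA : ContDiff ℝ 1 fun t : Fin r → ℝ => V.mulVec (Sum.elim t c) :=
      (((aux_contDiff_mulVec V).comp (hElimC c))).of_le le_top
    exact hH.comp hA.contDiffOn (fun t ht => hmemP t ht c hc)
  · intro xt1 h1 xt2 h2
    exact hindep xt1 h1 c hc xt2 h2
  · intro x hx
    obtain ⟨hx1, hx2⟩ := hmemX x hx
    calc H (V.mulVec (Sum.elim (fun i => Vᵀ.mulVec x (Sum.inl i)) c))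
        = H (V.mulVec (Sum.elim (fun i => Vᵀ.mulVec x (Sum.inl i))
            (fun j => Vᵀ.mulVec x (Sum.inr j)))) := hindep _ hx1 c hc _ hx2
      _ = H x := by rw [helim, hVVt']
  · -- part (ii)
    intro DHt1 hD zh2 hzh2cont hzh2diag
    obtain ⟨hDcont, hDsum, hDdiag⟩ := hD
    set U1 : Matrix (Fin r ⊕ Fin s) (Fin r) ℝ :=
      Matrix.of fun i (a : Fin r) => U i (Sum.inl a) with hU1def
    set U2 : Matrix (Fin r ⊕ Fin s) (Fin s) ℝ :=
      Matrix.of fun i (b : Fin s) => U i (Sum.inr b) with hU2def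
    have hU1mv : ∀ u : Fin r → ℝ, U1.mulVec u = U.mulVec (Sum.elim u 0) := by
      intro u; funext i
      simp [hU1def, Matrix.mulVec, dotProduct, Fintype.sum_sum_type]
    have hU2mv : ∀ u : Fin s → ℝ, U2.mulVec u = U.mulVec (Sum.elim 0 u) := by
      intro u; funext i
      simp [hU2def, Matrix.mulVec, dotProduct, Fintype.sum_sum_type]
    have hS1T : IsUnit S1ᵀ.det := by rwa [Matrix.det_transpose]
    -- projection π x = first block of Vᵀ x
    have hpicont : Continuous fun x : (Fin r ⊕ Fin s) → ℝ =>
        (fun a => Vᵀ.mulVec x (Sum.inl a)) :=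
      continuous_pi fun a => (continuous_apply (Sum.inl a)).comp (aux_cont_mulVec Vᵀ)
    -- Xt1 is open
    have hXt1open : IsOpen Xt1 := by
      have hXt1eq : Xt1 = (fun t => V.mulVec (Sum.elim t c)) ⁻¹' X := by
        ext t
        constructor
        · intro ht; exact hmemP t ht c hc
        · intro ht; exact ((hmem (Sum.elim t c)).mpr ht).1
      rw [hXt1eq]
      exact hX.preimage ((aux_cont_mulVec V).comp (hElimC c).continuous)
    -- combined zbar as one U-mulVec
    have hzbar_eq : ∀ (p : Fin r → ℝ) (q : Fin s → ℝ),
        U1.mulVec p + U2.mulVec q = U.mulVec (Sum.elim p q) := by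
      intro p q
      rw [hU1mv, hU2mv, ← Matrix.mulVec_add]
      have he : (Sum.elim p (0 : Fin s → ℝ) + Sum.elim (0 : Fin r → ℝ) q)
          = Sum.elim p q := by
        funext k; cases k <;> simp
      rw [he]
    refine ⟨continuousOn_const, ?_, ?_, fun x _ => rfl, ?_⟩
    · -- continuity of zbar
      apply ContinuousOn.add
      · apply (aux_cont_mulVec U1).comp_continuousOn
        apply (aux_cont_mulVec (S1ᵀ)⁻¹).comp_continuousOn
        apply hDcont.comp ((hpicont.comp continuous_fst).prodMk
          (hpicont.comp continuous_snd)).continuousOn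
        intro p hp
        exact ⟨(hmemX p.1 hp.1).1, (hmemX p.2 hp.2).1⟩
      · exact (aux_cont_mulVec U2).comp_continuousOn hzh2cont
    · -- the sum property
      intro x hx x' hx'
      obtain ⟨ha, _⟩ := hmemX x hx
      obtain ⟨ha', _⟩ := hmemX x' hx'
      show (U1.mulVec ((S1ᵀ)⁻¹.mulVec (DHt1
            (fun i => Vᵀ.mulVec x (Sum.inl i)) (fun i => Vᵀ.mulVec x' (Sum.inl i))))
          + U2.mulVec (zh2 x x')) ⬝ᵥ E.mulVec (x' - x) = H x' - H x
      set a : Fin r → ℝ := fun i => Vᵀ.mulVec x (Sum.inl i) with hadef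
      set a' : Fin r → ℝ := fun i => Vᵀ.mulVec x' (Sum.inl i) with ha'def
      have hE1 : E.mulVec (x' - x) = U.mulVec (Sum.elim (S1.mulVec (a' - a)) 0) := by
        have he : (fun i => Vᵀ.mulVec (x' - x) (Sum.inl i)) = a' - a := by
          funext i; simp [hadef, ha'def, Matrix.mulVec_sub]
        rw [← hVVt' (x' - x), hEV, he]
      rw [hE1, hzbar_eq, Matrix.dotProduct_mulVec, ← Matrix.mulVec_transpose,
        hUtU', sumElim_dotProduct_sumElim, dotProduct_zero, add_zero,
        Matrix.dotProduct_mulVec, ← Matrix.mulVec_transpose,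
        Matrix.mulVec_mulVec, Matrix.mul_nonsing_inv _ hS1T, Matrix.one_mulVec]
      have hsum := hDsum a ha a' ha'
      rw [hsum]
      show H (V.mulVec (Sum.elim a' c)) - H (V.mulVec (Sum.elim a c)) = H x' - H x
      have h1 : H (V.mulVec (Sum.elim a' c)) = H x' := by
        calc H (V.mulVec (Sum.elim a' c))
            = H (V.mulVec (Sum.elim a' (fun j => Vᵀ.mulVec x' (Sum.inr j)))) :=
              hindep a' ha' c hc _ (hmemX x' hx').2
          _ = H x' := by rw [ha'def, helim, hVVt']
      have h2 : H (V.mulVec (Sum.elim a c)) = H x := by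
        calc H (V.mulVec (Sum.elim a c))
            = H (V.mulVec (Sum.elim a (fun j => Vᵀ.mulVec x (Sum.inr j)))) :=
              hindep a ha c hc _ (hmemX x hx).2
          _ = H x := by rw [hadef, helim, hVVt']
      rw [h1, h2]
    · -- the diagonal property
      intro x hx
      obtain ⟨ha, hb⟩ := hmemX x hx
      show U1.mulVec ((S1ᵀ)⁻¹.mulVec (DHt1
            (fun i => Vᵀ.mulVec x (Sum.inl i)) (fun i => Vᵀ.mulVec x (Sum.inl i))))
          + U2.mulVec (zh2 x x) = z x
      set a : Fin r → ℝ := fun i => Vᵀ.mulVec x (Sum.inl i) with hadef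
      set b : Fin s → ℝ := fun j => Vᵀ.mulVec x (Sum.inr j) with hbdef
      -- gradient of Ht1 at a
      have hgradHt1 : gradI (fun t => H (V.mulVec (Sum.elim t c))) a
          = S1ᵀ.mulVec fun i => Uᵀ.mulVec (z x) (Sum.inl i) := by
        have hevq : (fun t => H (V.mulVec (Sum.elim t c)))
            =ᶠ[nhds a] (fun t => H (V.mulVec (Sum.elim t b))) := by
          apply Filter.eventuallyEq_of_mem (hXt1open.mem_nhds ha)
          intro t ht
          exact hindep t ht c hc b hb
        have hxb : V.mulVec (Sum.elim a b) = x := by rw [hadef, hbdef, helim, hVVt']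
        have hfd := hfdL b a (by rw [hxb]; exact hx)
        funext i
        show fderiv ℝ (fun t => H (V.mulVec (Sum.elim t c))) a (Pi.single i 1) = _
        rw [hevq.fderiv_eq, hfd.fderiv, ContinuousLinearMap.comp_apply, hMLapp,
          hxb, hgrad_dot x hx]
        have hps : (fun i' =>
              (Sum.elim (Pi.single i 1 : Fin r → ℝ) (0 : Fin s → ℝ)) (Sum.inl i'))
            = (Pi.single i 1 : Fin r → ℝ) := rfl
        rw [hps, aux_single_mulVec]
        simp [Matrix.mulVec, dotProduct, Matrix.transpose_apply, mul_comm]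
      rw [hDdiag a ha, hgradHt1, hzh2diag x hx]
      have hinv : (S1ᵀ)⁻¹.mulVec (S1ᵀ.mulVec fun i => Uᵀ.mulVec (z x) (Sum.inl i))
          = fun i => Uᵀ.mulVec (z x) (Sum.inl i) := by
        rw [Matrix.mulVec_mulVec, Matrix.nonsing_inv_mul _ hS1T, Matrix.one_mulVec]
      rw [hinv, hzbar_eq]
      rw [show (Sum.elim (fun i => Uᵀ.mulVec (z x) (Sum.inl i))
          (fun j => Uᵀ.mulVec (z x) (Sum.inr j)) : (Fin r ⊕ Fin s) → ℝ)
          = Uᵀ.mulVec (z x) from helim _]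
      exact hUUt' (z x)
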